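/- Let u be an admissible class of morphisms of F𝒞 which contains the morphism θ_x for every filtered object x. Then for every filtered object x and every natural number N, the canonical morphism σ_{≥N}x → x lies in u. -/

import Mathlib

open CategoryTheory CategoryTheory.Limits ZeroObject

universe v u

/-- An *admissible class* of morphisms in an abelian category: it contains all
isomorphisms, satisfies the two-out-of-three property, and in any morphism of
short exact sequences, if two of the three vertical morphisms lie in the class
then so does the third. -/
structure AdmissibleClass {C : Type u} [Category.{v} C] [Abelian C]
    (w : MorphismProperty C) : Prop where
  of_isIso : ∀ {x y : C} (f : x ⟶ y), IsIso f → w f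
  comp_mem : ∀ {x y z : C} (f : x ⟶ y) (g : y ⟶ z), w f → w g → w (f ≫ g)
  of_comp_left : ∀ {x y z : C} (f : x ⟶ y) (g : y ⟶ z), w g → w (f ≫ g) → w f
  of_comp_right : ∀ {x y z : C} (f : x ⟶ y) (g : y ⟶ z), w f → w (f ≫ g) → w g
  ses_fst : ∀ {S₁ S₂ : ShortComplex C}, S₁.ShortExact → S₂.ShortExact →
    ∀ (φ : S₁ ⟶ S₂), w φ.τ₂ → w φ.τ₃ → w φ.τ₁
  ses_snd : ∀ {S₁ S₂ : ShortComplex C}, S₁.ShortExact → S₂.ShortExact →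
    ∀ (φ : S₁ ⟶ S₂), w φ.τ₁ → w φ.τ₃ → w φ.τ₂
  ses_trd : ∀ {S₁ S₂ : ShortComplex C}, S₁.ShortExact → S₂.ShortExact →
    ∀ (φ : S₁ ⟶ S₂), w φ.τ₁ → w φ.τ₂ → w φ.τ₃

variable {C : Type u} [Category.{v} C] [Abelian C]

/-- The class `lw` of level weak equivalences in the category `F𝒞 = ℕ ⥤ 𝒞` of
filtered objects: morphisms all of whose components lie in `w`. -/
def LevelWeq (w : MorphismProperty C) : MorphismProperty (ℕ ⥤ C) :=
  fun _ _ f => ∀ n : ℕ, w (f.app n)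

/-- The class `w_st` of stable weak equivalences in `F𝒞 = ℕ ⥤ 𝒞`: morphisms
whose components eventually lie in `w`. -/
def StableWeq (w : MorphismProperty C) : MorphismProperty (ℕ ⥤ C) :=
  fun _ _ f => ∃ N : ℕ, ∀ n : ℕ, N ≤ n → w (f.app n)

/-- A filtered object is *weakly bounded* if its transition maps eventually
lie in `w`. -/
def WeaklyBounded (w : MorphismProperty C) (x : ℕ ⥤ C) : Prop :=
  ∃ N : ℕ, ∀ n : ℕ, N ≤ n → w (x.map (homOfLE (Nat.le_succ n)))

/-- A filtered object is *bounded* if its transition maps are eventually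
isomorphisms. -/
def BoundedFiltered (x : ℕ ⥤ C) : Prop :=
  ∃ b : ℕ, ∀ n : ℕ, b ≤ n → IsIso (x.map (homOfLE (Nat.le_succ n)))

/-- The shift `x[1]` of a filtered object: `(x[1])_k = x_{k+1}`. -/
def shiftOne (x : ℕ ⥤ C) : ℕ ⥤ C :=
  (Monotone.functor (f := fun n : ℕ => n + 1) fun _ _ h => Nat.succ_le_succ h) ⋙ x

/-- The morphism `θ_x : x ⟶ x[1]`, whose component at level `k` is the
transition map `i^x_k : x_k ⟶ x_{k+1}`. -/
def theta (x : ℕ ⥤ C) : x ⟶ shiftOne x where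
  app k := x.map (homOfLE (Nat.le_succ k))
  naturality k m f := by
    dsimp [shiftOne, Monotone.functor]
    rw [← x.map_comp, ← x.map_comp]
    exact congrArg x.map (Subsingleton.elim _ _)

/-- The truncation `σ_{≥N} x` of a filtered object: it is `0` in levels `< N`
and agrees with `x` (with the same transition maps) in levels `≥ N`. -/
noncomputable def sigmaGE (N : ℕ) (x : ℕ ⥤ C) : ℕ ⥤ C where
  obj k := if N ≤ k then x.obj k else 0
  map {k m} f :=
    if hk : N ≤ k then
      eqToHom (if_pos hk) ≫ x.map f ≫ eqToHom (if_pos (hk.trans (leOfHom f))).symm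
    else 0
  map_id k := by
    by_cases hk : N ≤ k
    · simp [hk]
    · simp only [dif_neg hk]
      have hz : IsZero (if N ≤ k then x.obj k else (0 : C)) := by
        rw [if_neg hk]; exact isZero_zero C
      exact hz.eq_of_src _ _
  map_comp {k m n} f g := by
    by_cases hk : N ≤ k
    · have hm : N ≤ m := hk.trans (leOfHom f)
      simp [dif_pos hk, dif_pos hm]
    · simp [dif_neg hk]

/-- The canonical morphism `σ_{≥N} x ⟶ x`: the identity in levels `≥ N`
and zero in levels `< N`. -/
noncomputable def sigmaGEToSelf (N : ℕ) (x : ℕ ⥤ C) : sigmaGE N x ⟶ x where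
  app k := if hk : N ≤ k then eqToHom (if_pos hk) else 0
  naturality k m f := by
    by_cases hk : N ≤ k
    · have hm : N ≤ m := hk.trans (leOfHom f)
      rw [dif_pos hk, dif_pos hm]
      simp [sigmaGE, dif_pos hk]
    · rw [dif_neg hk, zero_comp]
      simp [sigmaGE, dif_neg hk]
      rfl


section Aux

/-- The truncation `σ_{<N} x`: agrees with `x` in levels `< N` and is `0` in levels `≥ N`. -/
noncomputable def sigmaLT (N : ℕ) (x : ℕ ⥤ C) : ℕ ⥤ C where
  obj k := if k < N then x.obj k else 0
  map {k m} f :=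
    if hm : m < N then
      eqToHom (if_pos ((leOfHom f).trans_lt hm)) ≫ x.map f ≫ eqToHom (if_pos hm).symm
    else 0
  map_id k := by
    by_cases hk : k < N
    · simp [hk]
    · simp only [dif_neg hk]
      have hz : IsZero (if k < N then x.obj k else (0 : C)) := by
        rw [if_neg hk]; exact isZero_zero C
      exact hz.eq_of_src _ _
  map_comp {k m n} f g := by
    by_cases hn : n < N
    · have hm : m < N := (leOfHom g).trans_lt hn
      simp [dif_pos hn, dif_pos hm]
    · by_cases hm : m < N <;> simp [dif_neg hn, hm]

/-- The canonical projection `x ⟶ σ_{<N} x`. -/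
noncomputable def selfToSigmaLT (N : ℕ) (x : ℕ ⥤ C) : x ⟶ sigmaLT N x where
  app k := if hk : k < N then eqToHom (if_pos hk).symm else 0
  naturality k m f := by
    by_cases hm : m < N
    · have hk : k < N := (leOfHom f).trans_lt hm
      rw [dif_pos hk, dif_pos hm]
      simp [sigmaLT, dif_pos hm]
    · rw [dif_neg hm, comp_zero]
      simp [sigmaLT, dif_neg hm]
      rfl

lemma exact_of_levelwise (S : ShortComplex (ℕ ⥤ C))
    (h : ∀ k : ℕ, (S.map ((evaluation ℕ C).obj k)).Exact) : S.Exact := by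
  rw [ShortComplex.exact_iff_isZero_homology]
  rw [Functor.isZero_iff]
  intro k
  have hk := h k
  rw [ShortComplex.exact_iff_isZero_homology] at hk
  exact hk.of_iso (S.mapHomologyIso ((evaluation ℕ C).obj k)).symm

lemma mono_of_isZero_src {X Y : C} (f : X ⟶ Y) (h : IsZero X) : Mono f :=
  ⟨fun g g' _ => h.eq_of_tgt g g'⟩

lemma epi_of_isZero_tgt {X Y : C} (f : X ⟶ Y) (h : IsZero Y) : Epi f :=
  ⟨fun g g' _ => h.eq_of_src g g'⟩

lemma zeroMap_mem {u : MorphismProperty (ℕ ⥤ C)}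
    (hu : AdmissibleClass u) (hθ : ∀ x : ℕ ⥤ C, u (theta x)) :
    ∀ (N : ℕ) (q : ℕ ⥤ C), (∀ k : ℕ, N ≤ k → IsZero (q.obj k)) →
      u (0 : q ⟶ (0 : ℕ ⥤ C))
  | 0, q, hq => by
    have hz : IsZero q := by
      rw [Functor.isZero_iff]
      exact fun k => hq k (Nat.zero_le k)
    have he : (0 : q ⟶ (0 : ℕ ⥤ C)) = hz.isoZero.hom := hz.eq_of_src _ _
    rw [he]
    exact hu.of_isIso _ inferInstance
  | (N + 1), q, hq => by
    have h1 : u (theta q) := hθ q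
    have h2 : u (0 : shiftOne q ⟶ (0 : ℕ ⥤ C)) :=
      zeroMap_mem hu hθ N (shiftOne q) (fun k hk => hq (k + 1) (Nat.succ_le_succ hk))
    have h3 := hu.comp_mem _ _ h1 h2
    rwa [comp_zero] at h3

lemma sigmaGEToSelf_iso (N : ℕ) (x : ℕ ⥤ C) (k : ℕ) (hk : N ≤ k) :
    IsIso ((sigmaGEToSelf N x).app k) := by
  have h : (sigmaGEToSelf N x).app k =
      eqToHom (show (sigmaGE N x).obj k = x.obj k from if_pos hk) := dif_pos hk
  rw [h]; infer_instance

lemma sigmaGEToSelf_app_neg (N : ℕ) (x : ℕ ⥤ C) (k : ℕ) (hk : ¬ N ≤ k) :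
    (sigmaGEToSelf N x).app k = 0 := dif_neg hk

lemma selfToSigmaLT_iso (N : ℕ) (x : ℕ ⥤ C) (k : ℕ) (hk : k < N) :
    IsIso ((selfToSigmaLT N x).app k) := by
  have h : (selfToSigmaLT N x).app k =
      eqToHom (show x.obj k = (sigmaLT N x).obj k from (if_pos hk).symm) := dif_pos hk
  rw [h]; infer_instance

lemma selfToSigmaLT_app_neg (N : ℕ) (x : ℕ ⥤ C) (k : ℕ) (hk : ¬ k < N) :
    (selfToSigmaLT N x).app k = 0 := dif_neg hk

end Aux

theorem sigmaGEToSelf_mem {u : MorphismProperty (ℕ ⥤ C)}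
    (hu : AdmissibleClass u)
    (hθ : ∀ x : ℕ ⥤ C, u (theta x))
    (x : ℕ ⥤ C) (N : ℕ) :
    u (sigmaGEToSelf N x) := by
  -- the short exact sequence `0 ⟶ σ_{≥N} x ⟶ x ⟶ σ_{<N} x ⟶ 0`
  have hzero : sigmaGEToSelf N x ≫ selfToSigmaLT N x = 0 := by
    ext k
    dsimp [sigmaGEToSelf, selfToSigmaLT]
    by_cases hk : N ≤ k
    · rw [dif_pos hk, dif_neg (not_lt.2 hk), comp_zero]
    · rw [dif_neg hk, zero_comp]
  set S₁ : ShortComplex (ℕ ⥤ C) := ShortComplex.mk _ _ hzero with hS₁def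
  have hmono : Mono S₁.f := by
    have : ∀ k : ℕ, Mono (S₁.f.app k) := by
      intro k
      dsimp [S₁, sigmaGEToSelf]
      by_cases hk : N ≤ k
      · exact @IsIso.mono_of_iso _ _ _ _ _ (sigmaGEToSelf_iso N x k hk)
      · rw [dif_neg hk]
        refine mono_of_isZero_src _ ?_
        dsimp [sigmaGE]
        rw [if_neg hk]
        exact isZero_zero C
    exact NatTrans.mono_of_mono_app _
  have hepi : Epi S₁.g := by
    have : ∀ k : ℕ, Epi (S₁.g.app k) := by
      intro k
      dsimp [S₁, selfToSigmaLT]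
      by_cases hk : k < N
      · exact @IsIso.epi_of_iso _ _ _ _ _ (selfToSigmaLT_iso N x k hk)
      · rw [dif_neg hk]
        refine epi_of_isZero_tgt _ ?_
        dsimp [sigmaLT]
        rw [if_neg hk]
        exact isZero_zero C
    exact NatTrans.epi_of_epi_app _
  have hexact : S₁.Exact := by
    apply exact_of_levelwise
    intro k
    by_cases hk : N ≤ k
    · rw [ShortComplex.exact_iff_epi _ (selfToSigmaLT_app_neg N x k (not_lt.2 hk))]
      exact @IsIso.epi_of_iso _ _ _ _ _ (sigmaGEToSelf_iso N x k hk)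
    · rw [ShortComplex.exact_iff_mono _ (sigmaGEToSelf_app_neg N x k hk)]
      exact @IsIso.mono_of_iso _ _ _ _ _ (selfToSigmaLT_iso N x k (not_le.1 hk))
  have hSE₁ : S₁.ShortExact := ⟨hexact⟩
  -- the trivial short exact sequence `0 ⟶ x ⟶ x ⟶ 0 ⟶ 0`
  set S₂ : ShortComplex (ℕ ⥤ C) := ShortComplex.mk (𝟙 x) (0 : x ⟶ 0) (by simp) with hS₂def
  have hmono₂ : Mono S₂.f := by dsimp [S₂]; infer_instance
  have hepi₂ : Epi S₂.g := epi_of_isZero_tgt _ (isZero_zero _)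
  have hexact₂ : S₂.Exact := by
    rw [ShortComplex.exact_iff_epi _ rfl]
    dsimp [S₂]; infer_instance
  have hSE₂ : S₂.ShortExact := ⟨hexact₂⟩
  -- the morphism of short exact sequences
  let φ : S₁ ⟶ S₂ :=
    { τ₁ := sigmaGEToSelf N x
      τ₂ := 𝟙 x
      τ₃ := 0
      comm₁₂ := by simp [S₁, S₂]
      comm₂₃ := by simp [S₁, S₂] }
  have hτ₂ : u φ.τ₂ := hu.of_isIso _ inferInstance
  have hτ₃ : u φ.τ₃ := by
    refine zeroMap_mem hu hθ N (sigmaLT N x) (fun k hk => ?_)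
    dsimp [sigmaLT]
    rw [if_neg (not_lt.2 hk)]
    exact isZero_zero C
  exact hu.ses_fst hSE₁ hSE₂ φ hτ₂ hτ₃
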